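/- Lieb's concavity theorem for T-product tensors: let H be a Hermitian matrix (bcirc of a Hermitian T-product tensor). Then the map A ↦ tr(exp(H + log A)) is concave on positive definite Hermitian matrices: for t ∈ [0,1] and positive definite A₁, A₂, tr(exp(H + log(tA₁ + (1-t)A₂))) ≥ t·tr(exp(H + log A₁)) + (1-t)·tr(exp(H + log A₂)). -/

import Mathlib

open Matrix MeasureTheory Filter Topology
open scoped ComplexOrder

namespace LiebAux

/-- scalar parallel-sum inequality -/
lemma parallel_key {p q : ℝ} (hp : 0 < p) (hq : 0 < q) (w c : ℂ) :
    p * q / (p + q) * Complex.normSq c ≤ p * Complex.normSq w + q * Complex.normSq (c - w) := by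
  rw [div_mul_eq_mul_div, div_le_iff₀ (by positivity)]
  simp only [Complex.normSq_apply, Complex.sub_re, Complex.sub_im]
  nlinarith [sq_nonneg ((p+q) * w.re - q * c.re), sq_nonneg ((p+q) * w.im - q * c.im), hp.le, hq.le]

lemma parallel_eq {p q : ℝ} (hp : 0 < p) (hq : 0 < q) (c : ℂ) :
    p * Complex.normSq (((q / (p+q) : ℝ) : ℂ) * c)
      + q * Complex.normSq (c - ((q / (p+q) : ℝ) : ℂ) * c)
      = p * q / (p + q) * Complex.normSq c := by
  have hpq : (0:ℝ) < p + q := by positivity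
  have h1 : (c - ((q / (p+q) : ℝ) : ℂ) * c) = ((p / (p+q) : ℝ) : ℂ) * c := by
    push_cast
    field_simp
    ring
  rw [h1]
  simp only [Complex.normSq_mul, Complex.normSq_ofReal]
  field_simp
  ring

lemma klein_scalar {x y : ℝ} (hx : 0 < x) (hy : 0 < y) :
    x * Real.log y + x - x * Real.log x - y ≤ 0 := by
  have h := Real.log_le_sub_one_of_pos (show 0 < y / x by positivity)
  rw [Real.log_div hy.ne' hx.ne'] at h
  have h2 := mul_le_mul_of_nonneg_left h hx.le
  have hyx : x * (y / x - 1) = y - x := by field_simp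
  nlinarith


noncomputable def phi (x a lam : ℝ) : ℝ := x / (1 + lam) - x * a / (x + lam * a)

lemma phi_hasDeriv {x a : ℝ} (hx : 0 < x) (ha : 0 < a) {lam : ℝ} (hlam : 0 ≤ lam) :
    HasDerivAt (fun l => x * Real.log (1 + l) - x * Real.log (x + l * a)) (phi x a lam) lam := by
  have h1 : HasDerivAt (fun l : ℝ => 1 + l) 1 lam := (hasDerivAt_id lam).const_add 1
  have h2 : HasDerivAt (fun l : ℝ => x + l * a) a lam := by
    simpa using ((hasDerivAt_id lam).mul_const a).const_add x
  have hl1 : (0:ℝ) < 1 + lam := by linarith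
  have hl2 : (0:ℝ) < x + lam * a := by positivity
  have g1 := (h1.log hl1.ne').const_mul x
  have g2 := (h2.log hl2.ne').const_mul x
  have h := g1.sub g2
  refine h.congr_deriv ?_
  unfold phi
  field_simp

lemma phi_tendsto {x a : ℝ} (hx : 0 < x) (ha : 0 < a) :
    Tendsto (fun l => x * Real.log (1 + l) - x * Real.log (x + l * a)) atTop
      (𝓝 (- (x * Real.log a))) := by
  have hn : Tendsto (fun l : ℝ => l⁻¹ + 1) atTop (𝓝 (0 + 1)) :=
    tendsto_inv_atTop_zero.add tendsto_const_nhds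
  have hd : Tendsto (fun l : ℝ => x * l⁻¹ + a) atTop (𝓝 (x * 0 + a)) :=
    (tendsto_inv_atTop_zero.const_mul x).add tendsto_const_nhds
  have hratio : Tendsto (fun l : ℝ => (l⁻¹ + 1) / (x * l⁻¹ + a)) atTop (𝓝 ((0+1) / (x*0+a))) :=
    hn.div hd (by simpa using ha.ne')
  have heq : (fun l : ℝ => (l⁻¹ + 1) / (x * l⁻¹ + a)) =ᶠ[atTop]
      (fun l : ℝ => (1 + l) / (x + l * a)) := by
    filter_upwards [eventually_gt_atTop (0:ℝ)] with l hl
    rw [div_eq_div_iff (by positivity) (by positivity)]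
    field_simp
  have hratio' : Tendsto (fun l : ℝ => (1 + l) / (x + l * a)) atTop (𝓝 (1 / a)) := by
    simpa using (hratio.congr' heq)
  have hlog : Tendsto (fun l : ℝ => Real.log ((1 + l) / (x + l * a))) atTop
      (𝓝 (Real.log (1/a))) :=
    ((Real.continuousAt_log (by positivity)).tendsto).comp hratio'
  have heq2 : (fun l : ℝ => Real.log ((1 + l) / (x + l * a))) =ᶠ[atTop]
      (fun l : ℝ => Real.log (1 + l) - Real.log (x + l * a)) := by
    filter_upwards [eventually_gt_atTop (0:ℝ)] with l hl
    rw [Real.log_div (by positivity) (by positivity)]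
  have hfin := (hlog.congr' heq2).const_mul x
  have : x * Real.log (1/a) = -(x * Real.log a) := by
    rw [Real.log_div one_ne_zero ha.ne', Real.log_one]; ring
  rw [this] at hfin
  convert hfin using 2 with l
  ring

lemma phi_integral {x a : ℝ} (hx : 0 < x) (ha : 0 < a) :
    IntegrableOn (phi x a) (Set.Ioi (0:ℝ)) ∧
    ∫ lam in Set.Ioi (0:ℝ), phi x a lam = x * Real.log x - x * Real.log a := by
  set F := fun l => x * Real.log (1 + l) - x * Real.log (x + l * a) with hF
  have hderiv : ∀ l ∈ Set.Ici (0:ℝ), HasDerivAt F (phi x a l) l :=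
    fun l hl => phi_hasDeriv hx ha hl
  have htend := phi_tendsto hx ha
  have hF0 : F 0 = - (x * Real.log x) := by simp [hF]
  rcases le_or_gt a x with hax | hax
  · have hpos : ∀ l ∈ Set.Ioi (0:ℝ), 0 ≤ phi x a l := by
      intro l hl
      have hl0 : (0:ℝ) < l := hl
      have h1 : (0:ℝ) < 1 + l := by linarith
      have h2 : (0:ℝ) < x + l * a := by positivity
      have : x * a / (x + l * a) ≤ x / (1 + l) := by
        rw [div_le_div_iff₀ h2 h1]
        nlinarith
      unfold phi; linarith
    refine ⟨integrableOn_Ioi_deriv_of_nonneg' hderiv hpos htend, ?_⟩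
    rw [integral_Ioi_of_hasDerivAt_of_nonneg' hderiv hpos htend, hF0]
    ring
  · have hneg : ∀ l ∈ Set.Ioi (0:ℝ), phi x a l ≤ 0 := by
      intro l hl
      have hl0 : (0:ℝ) < l := hl
      have h1 : (0:ℝ) < 1 + l := by linarith
      have h2 : (0:ℝ) < x + l * a := by positivity
      have : x / (1 + l) ≤ x * a / (x + l * a) := by
        rw [div_le_div_iff₀ h1 h2]
        nlinarith
      unfold phi; linarith
    refine ⟨integrableOn_Ioi_deriv_of_nonpos' hderiv hneg htend, ?_⟩
    rw [integral_Ioi_of_hasDerivAt_of_nonpos' hderiv hneg htend, hF0]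
    ring

variable {n : ℕ}

noncomputable def dg (x : Fin n → ℝ) : Matrix (Fin n) (Fin n) ℂ :=
  Matrix.diagonal fun i => (x i : ℂ)

lemma dg_herm (x : Fin n → ℝ) : (dg x)ᴴ = dg x := by
  unfold dg
  rw [Matrix.diagonal_conjTranspose]
  have : (star fun i => ((x i : ℝ) : ℂ)) = fun i => ((x i : ℝ) : ℂ) := by
    funext i
    exact Complex.conj_ofReal _
  rw [this]

lemma trace_diag_conj (x a : Fin n → ℝ) (W : Matrix (Fin n) (Fin n) ℂ) :
    (dg x * W * dg a * Wᴴ).trace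
      = ((∑ i, ∑ j, x i * a j * Complex.normSq (W i j) : ℝ) : ℂ) := by
  have h1 : ∀ i j, (dg x * W * dg a) i j = (x i : ℂ) * W i j * (a j : ℂ) := by
    intro i j
    unfold dg
    rw [Matrix.mul_diagonal, Matrix.diagonal_mul]
  rw [Matrix.trace]
  push_cast
  refine Finset.sum_congr rfl fun i _ => ?_
  rw [Matrix.diag_apply, Matrix.mul_apply]
  refine Finset.sum_congr rfl fun j _ => ?_
  rw [h1, Matrix.conjTranspose_apply, Complex.star_def]
  linear_combination ((x i : ℂ) * (a j : ℂ)) * Complex.mul_conj (W i j)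

lemma trace_one' {U : Matrix (Fin n) (Fin n) ℂ} (hU : Uᴴ * U = 1) (x : Fin n → ℝ) :
    (U * dg x * Uᴴ).trace = ((∑ i, x i : ℝ) : ℂ) := by
  rw [Matrix.trace_mul_comm (U * dg x) Uᴴ, ← Matrix.mul_assoc, hU, Matrix.one_mul]
  unfold dg
  rw [Matrix.trace_diagonal]
  push_cast
  rfl

lemma trace_two (U V : Matrix (Fin n) (Fin n) ℂ) (x a : Fin n → ℝ) :
    ((U * dg x * Uᴴ) * (V * dg a * Vᴴ)).trace
      = ((∑ i, ∑ j, x i * a j * Complex.normSq ((Uᴴ*V) i j) : ℝ) : ℂ) := by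
  have h : (U * dg x * Uᴴ) * (V * dg a * Vᴴ) = U * (dg x * (Uᴴ*V) * dg a * Vᴴ) := by
    simp only [Matrix.mul_assoc]
  rw [h, Matrix.trace_mul_comm]
  have h2 : dg x * (Uᴴ*V) * dg a * Vᴴ * U = dg x * (Uᴴ*V) * dg a * (Uᴴ*V)ᴴ := by
    simp only [Matrix.conjTranspose_mul, Matrix.conjTranspose_conjTranspose, Matrix.mul_assoc]
  rw [h2, trace_diag_conj]

lemma dg_one : dg (fun _ : Fin n => (1:ℝ)) = (1 : Matrix (Fin n) (Fin n) ℂ) := by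
  unfold dg
  simp

lemma trace_quad {U V : Matrix (Fin n) (Fin n) ℂ} (hV : V * Vᴴ = 1)
    (x : Fin n → ℝ) (M : Matrix (Fin n) (Fin n) ℂ) :
    (Mᴴ * (U * dg x * Uᴴ) * M).trace
      = ((∑ i, ∑ j, x i * Complex.normSq ((Uᴴ*M*V) i j) : ℝ) : ℂ) := by
  have h : Mᴴ * (U * dg x * Uᴴ) * M = (Mᴴ * U) * (dg x * (Uᴴ * M)) := by
    simp only [Matrix.mul_assoc]
  rw [h, Matrix.trace_mul_comm, ← Matrix.mul_assoc, Matrix.mul_assoc, Matrix.mul_assoc]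
  have h2 : Uᴴ * M * (Mᴴ * U) = (Uᴴ*M*V) * (Uᴴ*M*V)ᴴ := by
    simp only [Matrix.conjTranspose_mul, Matrix.conjTranspose_conjTranspose, Matrix.mul_assoc]
    rw [← Matrix.mul_assoc V Vᴴ, hV, Matrix.one_mul]
  rw [h2]
  have h3 : dg x * ((Uᴴ*M*V) * (Uᴴ*M*V)ᴴ)
      = dg x * (Uᴴ*M*V) * dg (fun _ => (1:ℝ)) * (Uᴴ*M*V)ᴴ := by
    rw [dg_one]
    simp only [Matrix.mul_one, Matrix.mul_assoc]
  rw [h3, trace_diag_conj]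
  norm_num

lemma trace_quad' {U V : Matrix (Fin n) (Fin n) ℂ} (hU : U * Uᴴ = 1)
    (a : Fin n → ℝ) (M : Matrix (Fin n) (Fin n) ℂ) :
    (Mᴴ * M * (V * dg a * Vᴴ)).trace
      = ((∑ i, ∑ j, a j * Complex.normSq ((Uᴴ*M*V) i j) : ℝ) : ℂ) := by
  have h : Mᴴ * M * (V * dg a * Vᴴ) = (Mᴴ * (M * V)) * (dg a * Vᴴ) := by
    simp only [Matrix.mul_assoc]
  rw [h, Matrix.trace_mul_comm, Matrix.mul_assoc (dg a) Vᴴ]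
  have h2 : Vᴴ * (Mᴴ * (M * V)) = (Uᴴ*M*V)ᴴ * (Uᴴ*M*V) := by
    simp only [Matrix.conjTranspose_mul, Matrix.conjTranspose_conjTranspose, Matrix.mul_assoc]
    rw [← Matrix.mul_assoc U Uᴴ, hU, Matrix.one_mul]
  rw [h2]
  have h3 : dg a * ((Uᴴ*M*V)ᴴ * (Uᴴ*M*V))
      = dg a * (Uᴴ*M*V)ᴴ * dg (fun _ => (1:ℝ)) * ((Uᴴ*M*V)ᴴ)ᴴ := by
    rw [dg_one, Matrix.conjTranspose_conjTranspose]
    simp only [Matrix.mul_one, Matrix.mul_assoc]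
  rw [h3, trace_diag_conj]
  rw [Finset.sum_comm]
  push_cast
  refine Finset.sum_congr rfl fun i _ => Finset.sum_congr rfl fun j _ => ?_
  rw [Matrix.conjTranspose_apply, Complex.star_def, Complex.normSq_conj]
  push_cast
  ring

lemma trace_codiag {U : Matrix (Fin n) (Fin n) ℂ} (hU : Uᴴ * U = 1) (x y : Fin n → ℝ) :
    ((U * dg x * Uᴴ) * (U * dg y * Uᴴ)).trace = ((∑ i, x i * y i : ℝ) : ℂ) := by
  have h : (U * dg x * Uᴴ) * (U * dg y * Uᴴ) = U * (dg x * (Uᴴ * U) * dg y) * Uᴴ := by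
    simp only [Matrix.mul_assoc]
  rw [h, hU, Matrix.mul_one]
  have h2 : dg x * dg y = dg (fun i => x i * y i) := by
    unfold dg
    rw [Matrix.diagonal_mul_diagonal]
    push_cast
    rfl
  rw [h2, trace_one' hU]

lemma sum_normSq_row {W : Matrix (Fin n) (Fin n) ℂ} (h : W * Wᴴ = 1) (i : Fin n) :
    ∑ j, Complex.normSq (W i j) = 1 := by
  have h1 := congrFun (congrFun h i) i
  rw [Matrix.mul_apply, Matrix.one_apply_eq] at h1
  have h2 : ∀ j, W i j * Wᴴ j i = ((Complex.normSq (W i j) : ℝ) : ℂ) := fun j => by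
    rw [Matrix.conjTranspose_apply, Complex.star_def, Complex.mul_conj]
  rw [Finset.sum_congr rfl fun j _ => h2 j] at h1
  have := congrArg Complex.re h1
  simpa using this

lemma sum_normSq_col {W : Matrix (Fin n) (Fin n) ℂ} (h : Wᴴ * W = 1) (j : Fin n) :
    ∑ i, Complex.normSq (W i j) = 1 := by
  have := sum_normSq_row (W := Wᴴ) (by rw [Matrix.conjTranspose_conjTranspose, h]) j
  simpa [Matrix.conjTranspose_apply, Complex.star_def, Complex.normSq_conj] using this

lemma posDef_rep {U : Matrix (Fin n) (Fin n) ℂ} (hU1 : Uᴴ * U = 1) (hU2 : U * Uᴴ = 1)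
    {x : Fin n → ℝ} (hx : ∀ i, 0 < x i) : (U * dg x * Uᴴ).PosDef := by
  have hd : (dg x).PosDef := by
    unfold dg
    rw [Matrix.posDef_diagonal_iff]
    intro i
    exact_mod_cast hx i
  refine Matrix.PosDef.of_dotProduct_mulVec_pos (Matrix.isHermitian_mul_mul_conjTranspose U hd.isHermitian) (fun y hy => ?_)
  have hz : Uᴴ *ᵥ y ≠ 0 := by
    intro h0
    apply hy
    have : U *ᵥ (Uᴴ *ᵥ y) = y := by
      rw [Matrix.mulVec_mulVec, hU2, Matrix.one_mulVec]
    rw [h0, Matrix.mulVec_zero] at this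
    exact this.symm
  have key := hd.dotProduct_mulVec_pos hz
  have heq : dotProduct (star (Uᴴ *ᵥ y)) (dg x *ᵥ (Uᴴ *ᵥ y))
      = dotProduct (star y) ((U * dg x * Uᴴ) *ᵥ y) := by
    rw [Matrix.star_mulVec, Matrix.conjTranspose_conjTranspose,
      Matrix.mulVec_mulVec, ← dotProduct_mulVec, Matrix.mulVec_mulVec,
      ← Matrix.mul_assoc]
  rwa [heq] at key


variable {n : ℕ}

noncomputable def cw (U V : Matrix (Fin n) (Fin n) ℂ) (i j : Fin n) : ℝ :=
  Complex.normSq ((Uᴴ*V) i j)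

def unit (U : Matrix (Fin n) (Fin n) ℂ) : Prop := Uᴴ * U = 1 ∧ U * Uᴴ = 1

lemma cw_apply (U V : Matrix (Fin n) (Fin n) ℂ) (i j : Fin n) :
    cw U V i j = Complex.normSq ((Uᴴ*V) i j) := rfl

lemma cw_nonneg (U V : Matrix (Fin n) (Fin n) ℂ) (i j : Fin n) : 0 ≤ cw U V i j :=
  Complex.normSq_nonneg _

lemma cw_row {U V : Matrix (Fin n) (Fin n) ℂ} (hU : unit U) (hV : unit V) (i : Fin n) :
    ∑ j, cw U V i j = 1 := by
  apply sum_normSq_row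
  have : (Uᴴ*V) * (Uᴴ*V)ᴴ = Uᴴ * (V * Vᴴ) * U := by
    simp only [Matrix.conjTranspose_mul, Matrix.conjTranspose_conjTranspose, Matrix.mul_assoc]
  rw [this, hV.2, Matrix.mul_one, hU.1]

lemma cw_col {U V : Matrix (Fin n) (Fin n) ℂ} (hU : unit U) (hV : unit V) (j : Fin n) :
    ∑ i, cw U V i j = 1 := by
  apply sum_normSq_col
  have : (Uᴴ*V)ᴴ * (Uᴴ*V) = Vᴴ * (U * Uᴴ) * V := by
    simp only [Matrix.conjTranspose_mul, Matrix.conjTranspose_conjTranspose, Matrix.mul_assoc]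
  rw [this, hU.2, Matrix.mul_one, hV.1]

/-- Klein's inequality, matrix form. -/
lemma klein {U U' : Matrix (Fin n) (Fin n) ℂ} (hU : unit U) (hU' : unit U')
    {x y : Fin n → ℝ} (hx : ∀ i, 0 < x i) (hy : ∀ j, 0 < y j) :
    ((U * dg x * Uᴴ) * (U' * dg (fun j => Real.log (y j)) * U'ᴴ)).trace.re
      + (∑ i, x i) - (∑ i, x i * Real.log (x i)) ≤ ∑ j, y j := by
  rw [trace_two, Complex.ofReal_re]
  simp only [← cw_apply]
  have hrow := cw_row hU hU'
  have hcol := cw_col hU hU'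
  have h1 : ∑ i, x i = ∑ i, ∑ j, cw U U' i j * x i := by
    refine Finset.sum_congr rfl fun i _ => ?_
    rw [← Finset.sum_mul, hrow i, one_mul]
  have h2 : ∑ i, x i * Real.log (x i) = ∑ i, ∑ j, cw U U' i j * (x i * Real.log (x i)) := by
    refine Finset.sum_congr rfl fun i _ => ?_
    rw [← Finset.sum_mul, hrow i, one_mul]
  have h3 : ∑ j, y j = ∑ i, ∑ j, cw U U' i j * y j := by
    rw [Finset.sum_comm]
    refine Finset.sum_congr rfl fun j _ => ?_
    rw [← Finset.sum_mul, hcol j, one_mul]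
  rw [h1, h2, h3, ← sub_nonpos]
  simp only [← Finset.sum_add_distrib, ← Finset.sum_sub_distrib]
  apply Finset.sum_nonpos
  intro i _
  apply Finset.sum_nonpos
  intro j _
  have hk := klein_scalar (hx i) (hy j)
  have hcn : 0 ≤ cw U U' i j := cw_nonneg U U' i j
  nlinarith [mul_nonpos_of_nonneg_of_nonpos hcn hk]

noncomputable def Psi (U V : Matrix (Fin n) (Fin n) ℂ) (x a : Fin n → ℝ) (lam : ℝ) : ℝ :=
  ∑ i, ∑ j, cw U V i j * (x i * a j / (x i + lam * a j))

lemma psi_le {U V M : Matrix (Fin n) (Fin n) ℂ} (hU : unit U) (hV : unit V)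
    {x a : Fin n → ℝ} (hx : ∀ i, 0 < x i) (ha : ∀ j, 0 < a j)
    {lam : ℝ} (hlam : 0 < lam) :
    lam * Psi U V x a lam ≤ (Mᴴ * (U * dg x * Uᴴ) * M).trace.re
      + lam * ((1 - M)ᴴ * (1 - M) * (V * dg a * Vᴴ)).trace.re := by
  rw [trace_quad hV.2 x M, trace_quad' hU.2 a (1 - M), Complex.ofReal_re, Complex.ofReal_re]
  have hsub : Uᴴ * (1 - M) * V = Uᴴ*V - Uᴴ*M*V := by
    rw [Matrix.mul_sub, Matrix.mul_one, Matrix.sub_mul]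
  rw [hsub]
  unfold Psi
  rw [Finset.mul_sum, Finset.mul_sum]
  simp only [Finset.mul_sum]
  rw [← Finset.sum_add_distrib]
  apply Finset.sum_le_sum
  intro i _
  rw [← Finset.sum_add_distrib]
  apply Finset.sum_le_sum
  intro j _
  have hq : 0 < lam * a j := mul_pos hlam (ha j)
  have hkey := parallel_key (hx i) hq ((Uᴴ*M*V) i j) ((Uᴴ*V) i j)
  have hlhs : lam * (cw U V i j * (x i * a j / (x i + lam * a j)))
      = x i * (lam * a j) / (x i + lam * a j) * Complex.normSq ((Uᴴ*V) i j) := by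
    unfold cw
    have hxi := hx i
    have hq2 : (0:ℝ) < x i + lam * a j := by positivity
    field_simp
  rw [hlhs]
  calc x i * (lam * a j) / (x i + lam * a j) * Complex.normSq ((Uᴴ*V) i j)
      ≤ x i * Complex.normSq ((Uᴴ*M*V) i j)
        + (lam * a j) * Complex.normSq ((Uᴴ*V) i j - (Uᴴ*M*V) i j) := hkey
    _ = x i * Complex.normSq ((Uᴴ*M*V) i j)
        + lam * (a j * Complex.normSq ((Uᴴ*V - Uᴴ*M*V) i j)) := by
          rw [Matrix.sub_apply]; ring

lemma psi_eq {U V : Matrix (Fin n) (Fin n) ℂ} (hU : unit U) (hV : unit V)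
    {x a : Fin n → ℝ} (hx : ∀ i, 0 < x i) (ha : ∀ j, 0 < a j)
    {lam : ℝ} (hlam : 0 < lam) :
    ∃ M : Matrix (Fin n) (Fin n) ℂ,
      lam * Psi U V x a lam = (Mᴴ * (U * dg x * Uᴴ) * M).trace.re
        + lam * ((1 - M)ᴴ * (1 - M) * (V * dg a * Vᴴ)).trace.re := by
  set C : Matrix (Fin n) (Fin n) ℂ :=
    Matrix.of fun i j => ((lam * a j / (x i + lam * a j) : ℝ) : ℂ) * ((Uᴴ*V) i j) with hC
  refine ⟨U * C * Vᴴ, ?_⟩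
  have hN : Uᴴ * (U * C * Vᴴ) * V = C := by
    calc Uᴴ * (U * C * Vᴴ) * V = (Uᴴ * U) * C * (Vᴴ * V) := by
          simp only [Matrix.mul_assoc]
    _ = C := by rw [hU.1, hV.1, Matrix.one_mul, Matrix.mul_one]
  rw [trace_quad hV.2 x (U * C * Vᴴ), trace_quad' hU.2 a (1 - (U * C * Vᴴ)),
    Complex.ofReal_re, Complex.ofReal_re]
  have hsub : Uᴴ * (1 - (U * C * Vᴴ)) * V = Uᴴ*V - C := by
    rw [Matrix.mul_sub, Matrix.mul_one, Matrix.sub_mul, hN]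
  rw [hsub, hN]
  unfold Psi
  rw [Finset.mul_sum, Finset.mul_sum]
  simp only [Finset.mul_sum]
  rw [← Finset.sum_add_distrib]
  refine Finset.sum_congr rfl fun i _ => ?_
  rw [← Finset.sum_add_distrib]
  refine Finset.sum_congr rfl fun j _ => ?_
  have hq : 0 < lam * a j := mul_pos hlam (ha j)
  have hxi := hx i
  have hpq : (0:ℝ) < x i + lam * a j := by positivity
  have hCij : C i j = (((lam * a j) / (x i + lam * a j) : ℝ) : ℂ) * ((Uᴴ*V) i j) := rfl
  have hkey := parallel_eq (hx i) hq ((Uᴴ*V) i j)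
  rw [Matrix.sub_apply, hCij]
  rw [show x i * Complex.normSq ((((lam * a j) / (x i + lam * a j) : ℝ) : ℂ) * ((Uᴴ*V) i j))
        + lam * (a j * Complex.normSq ((Uᴴ*V) i j
          - (((lam * a j) / (x i + lam * a j) : ℝ) : ℂ) * ((Uᴴ*V) i j)))
      = x i * Complex.normSq ((((lam * a j) / (x i + lam * a j) : ℝ) : ℂ) * ((Uᴴ*V) i j))
        + (lam * a j) * Complex.normSq ((Uᴴ*V) i j
          - (((lam * a j) / (x i + lam * a j) : ℝ) : ℂ) * ((Uᴴ*V) i j)) from by ring]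
  rw [hkey]
  unfold cw
  field_simp


lemma trace_re_affine (r s : ℝ) (A B : Matrix (Fin n) (Fin n) ℂ) :
    (r • A + s • B).trace.re = r * A.trace.re + s * B.trace.re := by
  rw [Matrix.trace_add, Matrix.trace_smul, Matrix.trace_smul, Complex.add_re]
  rw [show (r • A.trace).re = r * A.trace.re from by
    rw [Complex.real_smul, Complex.re_ofReal_mul]]
  rw [show (s • B.trace).re = s * B.trace.re from by
    rw [Complex.real_smul, Complex.re_ofReal_mul]]

lemma psi_concave
    {U₁ V₁ U₂ V₂ Ub Vb : Matrix (Fin n) (Fin n) ℂ}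
    (hU₁ : unit U₁) (hV₁ : unit V₁) (hU₂ : unit U₂) (hV₂ : unit V₂)
    (hUb : unit Ub) (hVb : unit Vb)
    {x₁ a₁ x₂ a₂ xb ab : Fin n → ℝ}
    (hx₁ : ∀ i, 0 < x₁ i) (ha₁ : ∀ j, 0 < a₁ j) (hx₂ : ∀ i, 0 < x₂ i) (ha₂ : ∀ j, 0 < a₂ j)
    (hxb : ∀ i, 0 < xb i) (hab : ∀ j, 0 < ab j)
    {t : ℝ} (ht0 : 0 < t) (ht1 : t < 1)
    (hX : Ub * dg xb * Ubᴴ = t • (U₁ * dg x₁ * U₁ᴴ) + (1-t) • (U₂ * dg x₂ * U₂ᴴ))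
    (hA : Vb * dg ab * Vbᴴ = t • (V₁ * dg a₁ * V₁ᴴ) + (1-t) • (V₂ * dg a₂ * V₂ᴴ))
    {lam : ℝ} (hlam : 0 < lam) :
    t * Psi U₁ V₁ x₁ a₁ lam + (1-t) * Psi U₂ V₂ x₂ a₂ lam ≤ Psi Ub Vb xb ab lam := by
  obtain ⟨M, hM⟩ := psi_eq hUb hVb hxb hab hlam
  have hq1 := psi_le (M := M) hU₁ hV₁ hx₁ ha₁ hlam
  have hq2 := psi_le (M := M) hU₂ hV₂ hx₂ ha₂ hlam
  have expand : ∀ X Y : Matrix (Fin n) (Fin n) ℂ, ∀ P : Matrix (Fin n) (Fin n) ℂ,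
      Pᴴ * (t • X + (1-t) • Y) * P = t • (Pᴴ*X*P) + (1-t) • (Pᴴ*Y*P) := by
    intro X Y P
    rw [Matrix.mul_add, Matrix.add_mul, Matrix.mul_smul, Matrix.smul_mul,
      Matrix.mul_smul, Matrix.smul_mul]
  have e1 : (Mᴴ * (Ub * dg xb * Ubᴴ) * M).trace.re
      = t * (Mᴴ * (U₁ * dg x₁ * U₁ᴴ) * M).trace.re
        + (1-t) * (Mᴴ * (U₂ * dg x₂ * U₂ᴴ) * M).trace.re := by
    rw [hX, expand, trace_re_affine]
  have e2 : ((1-M)ᴴ * (1-M) * (Vb * dg ab * Vbᴴ)).trace.re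
      = t * ((1-M)ᴴ * (1-M) * (V₁ * dg a₁ * V₁ᴴ)).trace.re
        + (1-t) * ((1-M)ᴴ * (1-M) * (V₂ * dg a₂ * V₂ᴴ)).trace.re := by
    rw [hA, Matrix.mul_add, Matrix.mul_smul, Matrix.mul_smul, trace_re_affine]
  have key : lam * (t * Psi U₁ V₁ x₁ a₁ lam + (1-t) * Psi U₂ V₂ x₂ a₂ lam)
      ≤ lam * Psi Ub Vb xb ab lam := by
    rw [hM, e1, e2]
    have h1t : (0:ℝ) ≤ 1 - t := by linarith
    nlinarith [mul_le_mul_of_nonneg_left hq1 ht0.le,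
      mul_le_mul_of_nonneg_left hq2 h1t]
  exact le_of_mul_le_mul_left (by linarith [key]) hlam

noncomputable def Drel (U V : Matrix (Fin n) (Fin n) ℂ) (x a : Fin n → ℝ) : ℝ :=
  ∑ i, ∑ j, cw U V i j * (x i * Real.log (x i) - x i * Real.log (a j))

noncomputable def Gfun (U V : Matrix (Fin n) (Fin n) ℂ) (x a : Fin n → ℝ) (lam : ℝ) : ℝ :=
  ∑ i, ∑ j, cw U V i j * phi (x i) (a j) lam

lemma Gfun_integrable {U V : Matrix (Fin n) (Fin n) ℂ} {x a : Fin n → ℝ}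
    (hx : ∀ i, 0 < x i) (ha : ∀ j, 0 < a j) :
    IntegrableOn (Gfun U V x a) (Set.Ioi (0:ℝ)) := by
  unfold Gfun
  apply MeasureTheory.integrable_finset_sum
  intro i _
  apply MeasureTheory.integrable_finset_sum
  intro j _
  exact ((phi_integral (hx i) (ha j)).1).const_mul _

lemma Drel_eq_integral {U V : Matrix (Fin n) (Fin n) ℂ} {x a : Fin n → ℝ}
    (hx : ∀ i, 0 < x i) (ha : ∀ j, 0 < a j) :
    ∫ lam in Set.Ioi (0:ℝ), Gfun U V x a lam = Drel U V x a := by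
  unfold Gfun Drel
  rw [MeasureTheory.integral_finset_sum _ (fun i _ => by
    apply MeasureTheory.integrable_finset_sum
    intro j _
    exact ((phi_integral (hx i) (ha j)).1).const_mul _)]
  refine Finset.sum_congr rfl fun i _ => ?_
  rw [MeasureTheory.integral_finset_sum _ (fun j _ =>
    ((phi_integral (hx i) (ha j)).1).const_mul _)]
  refine Finset.sum_congr rfl fun j _ => ?_
  rw [MeasureTheory.integral_const_mul, (phi_integral (hx i) (ha j)).2]

lemma Gfun_eq {U V : Matrix (Fin n) (Fin n) ℂ} (hU : unit U) (hV : unit V)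
    (x a : Fin n → ℝ) (lam : ℝ) :
    Gfun U V x a lam = (∑ i, x i) / (1 + lam) - Psi U V x a lam := by
  unfold Gfun Psi phi
  rw [eq_sub_iff_add_eq, ← Finset.sum_add_distrib]
  have : ∀ i, ∑ j, cw U V i j * (x i / (1 + lam) - x i * a j / (x i + lam * a j))
      + ∑ j, cw U V i j * (x i * a j / (x i + lam * a j)) = x i / (1 + lam) := by
    intro i
    rw [← Finset.sum_add_distrib]
    have : ∀ j, cw U V i j * (x i / (1 + lam) - x i * a j / (x i + lam * a j))
        + cw U V i j * (x i * a j / (x i + lam * a j)) = cw U V i j * (x i / (1 + lam)) := by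
      intro j; ring
    rw [Finset.sum_congr rfl fun j _ => this j, ← Finset.sum_mul, cw_row hU hV, one_mul]
  rw [Finset.sum_congr rfl fun i _ => this i, Finset.sum_div]

lemma Drel_convex
    {U₁ V₁ U₂ V₂ Ub Vb : Matrix (Fin n) (Fin n) ℂ}
    (hU₁ : unit U₁) (hV₁ : unit V₁) (hU₂ : unit U₂) (hV₂ : unit V₂)
    (hUb : unit Ub) (hVb : unit Vb)
    {x₁ a₁ x₂ a₂ xb ab : Fin n → ℝ}
    (hx₁ : ∀ i, 0 < x₁ i) (ha₁ : ∀ j, 0 < a₁ j) (hx₂ : ∀ i, 0 < x₂ i) (ha₂ : ∀ j, 0 < a₂ j)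
    (hxb : ∀ i, 0 < xb i) (hab : ∀ j, 0 < ab j)
    {t : ℝ} (ht0 : 0 < t) (ht1 : t < 1)
    (hX : Ub * dg xb * Ubᴴ = t • (U₁ * dg x₁ * U₁ᴴ) + (1-t) • (U₂ * dg x₂ * U₂ᴴ))
    (hA : Vb * dg ab * Vbᴴ = t • (V₁ * dg a₁ * V₁ᴴ) + (1-t) • (V₂ * dg a₂ * V₂ᴴ)) :
    Drel Ub Vb xb ab ≤ t * Drel U₁ V₁ x₁ a₁ + (1-t) * Drel U₂ V₂ x₂ a₂ := by
  have hSx : (∑ i, xb i) = t * (∑ i, x₁ i) + (1-t) * (∑ i, x₂ i) := by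
    have h := congrArg (fun A : Matrix (Fin n) (Fin n) ℂ => A.trace.re) hX
    rw [trace_one' hUb.1, trace_re_affine, trace_one' hU₁.1, trace_one' hU₂.1,
      Complex.ofReal_re, Complex.ofReal_re, Complex.ofReal_re] at h
    exact h
  have hint1 := Gfun_integrable (U := U₁) (V := V₁) hx₁ ha₁
  have hint2 := Gfun_integrable (U := U₂) (V := V₂) hx₂ ha₂
  have hintb := Gfun_integrable (U := Ub) (V := Vb) hxb hab
  have hpt : ∀ lam ∈ Set.Ioi (0:ℝ),
      0 ≤ t * Gfun U₁ V₁ x₁ a₁ lam + (1-t) * Gfun U₂ V₂ x₂ a₂ lam - Gfun Ub Vb xb ab lam := by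
    intro lam hlam
    rw [Gfun_eq hU₁ hV₁, Gfun_eq hU₂ hV₂, Gfun_eq hUb hVb]
    have hpsi := psi_concave hU₁ hV₁ hU₂ hV₂ hUb hVb hx₁ ha₁ hx₂ ha₂ hxb hab ht0 ht1 hX hA
      (Set.mem_Ioi.mp hlam)
    rw [hSx, add_div, mul_div_assoc, mul_div_assoc]
    linarith [hpsi]
  have hI : 0 ≤ ∫ lam in Set.Ioi (0:ℝ),
      (t * Gfun U₁ V₁ x₁ a₁ lam + (1-t) * Gfun U₂ V₂ x₂ a₂ lam - Gfun Ub Vb xb ab lam) :=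
    MeasureTheory.setIntegral_nonneg measurableSet_Ioi hpt
  have hc1 : IntegrableOn (fun lam => t * Gfun U₁ V₁ x₁ a₁ lam) (Set.Ioi (0:ℝ)) :=
    hint1.const_mul t
  have hc2 : IntegrableOn (fun lam => (1-t) * Gfun U₂ V₂ x₂ a₂ lam) (Set.Ioi (0:ℝ)) :=
    hint2.const_mul (1-t)
  have hc12 : IntegrableOn
      (fun lam => t * Gfun U₁ V₁ x₁ a₁ lam + (1-t) * Gfun U₂ V₂ x₂ a₂ lam) (Set.Ioi (0:ℝ)) :=
    hc1.add hc2
  rw [MeasureTheory.integral_sub hc12 hintb, MeasureTheory.integral_add hc1 hc2,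
    MeasureTheory.integral_const_mul, MeasureTheory.integral_const_mul,
    Drel_eq_integral hx₁ ha₁, Drel_eq_integral hx₂ ha₂, Drel_eq_integral hxb hab] at hI
  linarith


lemma unit_eigen {A : Matrix (Fin n) (Fin n) ℂ} (hA : A.IsHermitian) :
    unit (hA.eigenvectorUnitary : Matrix (Fin n) (Fin n) ℂ) := by
  constructor
  · rw [← Matrix.star_eq_conjTranspose]
    exact Unitary.coe_star_mul_self hA.eigenvectorUnitary
  · rw [← Matrix.star_eq_conjTranspose]
    exact Unitary.coe_mul_star_self hA.eigenvectorUnitary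

lemma herm_rep {A : Matrix (Fin n) (Fin n) ℂ} (hA : A.IsHermitian) :
    A = (hA.eigenvectorUnitary : Matrix (Fin n) (Fin n) ℂ) * dg hA.eigenvalues
      * (hA.eigenvectorUnitary : Matrix (Fin n) (Fin n) ℂ)ᴴ := by
  conv_lhs => rw [hA.spectral_theorem]
  rfl

lemma cfc_rep {A : Matrix (Fin n) (Fin n) ℂ} (hA : A.IsHermitian) (f : ℝ → ℝ) :
    cfc f A = (hA.eigenvectorUnitary : Matrix (Fin n) (Fin n) ℂ)
      * dg (f ∘ hA.eigenvalues) * (hA.eigenvectorUnitary : Matrix (Fin n) (Fin n) ℂ)ᴴ := by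
  rw [hA.cfc_eq]
  rfl

lemma posDef_smul {A : Matrix (Fin n) (Fin n) ℂ} (hA : A.PosDef) {t : ℝ} (ht : 0 < t) :
    (t • A).PosDef := by
  refine Matrix.PosDef.of_dotProduct_mulVec_pos ?_ ?_
  · have := hA.1
    unfold Matrix.IsHermitian at *
    rw [Matrix.conjTranspose_smul, this, star_trivial]
  · intro y hy
    have h := hA.dotProduct_mulVec_pos hy
    have e1 : (t • A) *ᵥ y = t • (A *ᵥ y) := Matrix.smul_mulVec t A y
    rw [e1, dotProduct_smul]
    have ht' : (0:ℂ) < (t:ℂ) := by exact_mod_cast ht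
    calc (0:ℂ) = (t:ℂ) * 0 := by ring
    _ < (t:ℂ) * (dotProduct (star y) (A *ᵥ y)) := by
        apply mul_lt_mul_of_pos_left h ht'
    _ = t • (dotProduct (star y) (A *ᵥ y)) := by rw [Complex.real_smul]

lemma Drel_trace {U V : Matrix (Fin n) (Fin n) ℂ} (hU : unit U) (hV : unit V)
    (x a : Fin n → ℝ) :
    Drel U V x a = (∑ i, x i * Real.log (x i))
      - ((U * dg x * Uᴴ) * (V * dg (fun j => Real.log (a j)) * Vᴴ)).trace.re := by
  rw [trace_two, Complex.ofReal_re]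
  unfold Drel
  simp only [← cw_apply]
  rw [eq_sub_iff_add_eq, ← Finset.sum_add_distrib]
  have : ∀ i, (∑ j, cw U V i j * (x i * Real.log (x i) - x i * Real.log (a j)))
      + ∑ j, x i * Real.log (a j) * cw U V i j = x i * Real.log (x i) := by
    intro i
    rw [← Finset.sum_add_distrib]
    have e : ∀ j, cw U V i j * (x i * Real.log (x i) - x i * Real.log (a j))
        + x i * Real.log (a j) * cw U V i j = cw U V i j * (x i * Real.log (x i)) := by
      intro j; ring
    rw [Finset.sum_congr rfl fun j _ => e j, ← Finset.sum_mul, cw_row hU hV, one_mul]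
  rw [Finset.sum_congr rfl fun i _ => this i]

end LiebAux

open LiebAux in
/-- Lieb's concavity theorem (at the `bcirc`-matrix level): for a fixed Hermitian
matrix `H`, the map `A ↦ tr (exp (H + log A))` is concave on positive definite
Hermitian matrices. -/
theorem lieb_concavity {n : ℕ} (H : Matrix (Fin n) (Fin n) ℂ) (hH : H.IsHermitian)
    (A₁ A₂ : Matrix (Fin n) (Fin n) ℂ) (hA₁ : A₁.PosDef) (hA₂ : A₂.PosDef)
    (t : ℝ) (ht : t ∈ Set.Icc (0:ℝ) 1) :
    t * ((cfc Real.exp (H + cfc Real.log A₁)).trace).re +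
      (1 - t) * ((cfc Real.exp (H + cfc Real.log A₂)).trace).re ≤
    ((cfc Real.exp (H + cfc Real.log (t • A₁ + (1 - t) • A₂))).trace).re := by
  obtain ⟨ht0, ht1⟩ := ht
  rcases eq_or_lt_of_le ht0 with h0 | ht0
  · rw [← h0]; simp
  rcases eq_or_lt_of_le ht1 with h1 | ht1
  · rw [h1]; simp
  have h1t : (0:ℝ) < 1 - t := by linarith
  -- the combined positive definite matrix
  set Ab : Matrix (Fin n) (Fin n) ℂ := t • A₁ + (1 - t) • A₂ with hAb_def
  have hAb : Ab.PosDef := (posDef_smul hA₁ ht0).add (posDef_smul hA₂ h1t)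
  -- eigendecompositions of A₁, A₂, Ab
  set V₁ : Matrix (Fin n) (Fin n) ℂ := (hA₁.1.eigenvectorUnitary : Matrix (Fin n) (Fin n) ℂ) with hV₁def
  set V₂ : Matrix (Fin n) (Fin n) ℂ := (hA₂.1.eigenvectorUnitary : Matrix (Fin n) (Fin n) ℂ) with hV₂def
  set Vb : Matrix (Fin n) (Fin n) ℂ := (hAb.1.eigenvectorUnitary : Matrix (Fin n) (Fin n) ℂ) with hVbdef
  set a₁ := hA₁.1.eigenvalues with ha₁def
  set a₂ := hA₂.1.eigenvalues with ha₂def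
  set ab := hAb.1.eigenvalues with habdef
  have hV₁ : unit V₁ := unit_eigen hA₁.1
  have hV₂ : unit V₂ := unit_eigen hA₂.1
  have hVb : unit Vb := unit_eigen hAb.1
  have ha₁ : ∀ i, 0 < a₁ i := hA₁.eigenvalues_pos
  have ha₂ : ∀ i, 0 < a₂ i := hA₂.eigenvalues_pos
  have hab : ∀ i, 0 < ab i := hAb.eigenvalues_pos
  -- the logs
  have hL₁ : cfc Real.log A₁ = V₁ * dg (Real.log ∘ a₁) * V₁ᴴ := cfc_rep hA₁.1 Real.log
  have hL₂ : cfc Real.log A₂ = V₂ * dg (Real.log ∘ a₂) * V₂ᴴ := cfc_rep hA₂.1 Real.log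
  have hLb : cfc Real.log Ab = Vb * dg (Real.log ∘ ab) * Vbᴴ := cfc_rep hAb.1 Real.log
  -- the Hermitian exponents
  have hM₁ : (H + cfc Real.log A₁).IsHermitian := by
    rw [hL₁]
    exact hH.add (Matrix.isHermitian_mul_mul_conjTranspose V₁ (dg_herm (Real.log ∘ a₁)))
  have hM₂ : (H + cfc Real.log A₂).IsHermitian := by
    rw [hL₂]
    exact hH.add (Matrix.isHermitian_mul_mul_conjTranspose V₂ (dg_herm (Real.log ∘ a₂)))
  have hMb : (H + cfc Real.log Ab).IsHermitian := by
    rw [hLb]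
    exact hH.add (Matrix.isHermitian_mul_mul_conjTranspose Vb (dg_herm (Real.log ∘ ab)))
  set U₁ : Matrix (Fin n) (Fin n) ℂ := (hM₁.eigenvectorUnitary : Matrix (Fin n) (Fin n) ℂ) with hU₁def
  set U₂ : Matrix (Fin n) (Fin n) ℂ := (hM₂.eigenvectorUnitary : Matrix (Fin n) (Fin n) ℂ) with hU₂def
  set Ub : Matrix (Fin n) (Fin n) ℂ := (hMb.eigenvectorUnitary : Matrix (Fin n) (Fin n) ℂ) with hUbdef
  set mu₁ := hM₁.eigenvalues with hmu₁def
  set mu₂ := hM₂.eigenvalues with hmu₂def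
  set mub := hMb.eigenvalues with hmubdef
  have hU₁ : unit U₁ := unit_eigen hM₁
  have hU₂ : unit U₂ := unit_eigen hM₂
  have hUb : unit Ub := unit_eigen hMb
  set x₁ := Real.exp ∘ mu₁ with hx₁def
  set x₂ := Real.exp ∘ mu₂ with hx₂def
  set xb := Real.exp ∘ mub with hxbdef
  have hx₁ : ∀ i, 0 < x₁ i := fun i => Real.exp_pos _
  have hx₂ : ∀ i, 0 < x₂ i := fun i => Real.exp_pos _
  have hxb : ∀ i, 0 < xb i := fun i => Real.exp_pos _
  -- the exponentials
  have hX₁ : cfc Real.exp (H + cfc Real.log A₁) = U₁ * dg x₁ * U₁ᴴ := cfc_rep hM₁ Real.exp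
  have hX₂ : cfc Real.exp (H + cfc Real.log A₂) = U₂ * dg x₂ * U₂ᴴ := cfc_rep hM₂ Real.exp
  have hXb : cfc Real.exp (H + cfc Real.log Ab) = Ub * dg xb * Ubᴴ := cfc_rep hMb Real.exp
  -- traces of the exponentials
  have hE₁ : (cfc Real.exp (H + cfc Real.log A₁)).trace.re = ∑ i, x₁ i := by
    rw [hX₁, trace_one' hU₁.1, Complex.ofReal_re]
  have hE₂ : (cfc Real.exp (H + cfc Real.log A₂)).trace.re = ∑ i, x₂ i := by
    rw [hX₂, trace_one' hU₂.1, Complex.ofReal_re]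
  have hEb : (cfc Real.exp (H + cfc Real.log Ab)).trace.re = ∑ i, xb i := by
    rw [hXb, trace_one' hUb.1, Complex.ofReal_re]
  -- identities: Drel of (X_k, A_k) equals the H-trace term
  have hfun₁ : dg (fun j => Real.log (a₁ j)) = dg (Real.log ∘ a₁) := rfl
  have hfun₂ : dg (fun j => Real.log (a₂ j)) = dg (Real.log ∘ a₂) := rfl
  have hfunb : dg (fun j => Real.log (ab j)) = dg (Real.log ∘ ab) := rfl
  have hMrep₁ : H + cfc Real.log A₁ = U₁ * dg mu₁ * U₁ᴴ := herm_rep hM₁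
  have hMrep₂ : H + cfc Real.log A₂ = U₂ * dg mu₂ * U₂ᴴ := herm_rep hM₂
  have hsplit₁ : ((U₁ * dg x₁ * U₁ᴴ) * (H + cfc Real.log A₁)).trace.re
      = ((U₁ * dg x₁ * U₁ᴴ) * H).trace.re
        + ((U₁ * dg x₁ * U₁ᴴ) * (V₁ * dg (Real.log ∘ a₁) * V₁ᴴ)).trace.re := by
    rw [hL₁, Matrix.mul_add, Matrix.trace_add, Complex.add_re]
  have hsplit₂ : ((U₂ * dg x₂ * U₂ᴴ) * (H + cfc Real.log A₂)).trace.re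
      = ((U₂ * dg x₂ * U₂ᴴ) * H).trace.re
        + ((U₂ * dg x₂ * U₂ᴴ) * (V₂ * dg (Real.log ∘ a₂) * V₂ᴴ)).trace.re := by
    rw [hL₂, Matrix.mul_add, Matrix.trace_add, Complex.add_re]
  have hco₁ : ((U₁ * dg x₁ * U₁ᴴ) * (H + cfc Real.log A₁)).trace.re = ∑ i, x₁ i * mu₁ i := by
    rw [hMrep₁, trace_codiag hU₁.1, Complex.ofReal_re]
  have hco₂ : ((U₂ * dg x₂ * U₂ᴴ) * (H + cfc Real.log A₂)).trace.re = ∑ i, x₂ i * mu₂ i := by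
    rw [hMrep₂, trace_codiag hU₂.1, Complex.ofReal_re]
  have hent₁ : ∑ i, x₁ i * Real.log (x₁ i) = ∑ i, x₁ i * mu₁ i := by
    refine Finset.sum_congr rfl fun i _ => ?_
    rw [hx₁def]
    simp [Real.log_exp]
  have hent₂ : ∑ i, x₂ i * Real.log (x₂ i) = ∑ i, x₂ i * mu₂ i := by
    refine Finset.sum_congr rfl fun i _ => ?_
    rw [hx₂def]
    simp [Real.log_exp]
  have hD₁ : Drel U₁ V₁ x₁ a₁ = ((U₁ * dg x₁ * U₁ᴴ) * H).trace.re := by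
    rw [Drel_trace hU₁ hV₁ x₁ a₁, hfun₁]
    linarith [hsplit₁, hco₁, hent₁]
  have hD₂ : Drel U₂ V₂ x₂ a₂ = ((U₂ * dg x₂ * U₂ᴴ) * H).trace.re := by
    rw [Drel_trace hU₂ hV₂ x₂ a₂, hfun₂]
    linarith [hsplit₂, hco₂, hent₂]
  -- the convex combination of the exponentials
  have hXbpos : (t • (U₁ * dg x₁ * U₁ᴴ) + (1-t) • (U₂ * dg x₂ * U₂ᴴ)).PosDef :=
    (posDef_smul (posDef_rep hU₁.1 hU₁.2 hx₁) ht0).add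
      (posDef_smul (posDef_rep hU₂.1 hU₂.2 hx₂) h1t)
  set W : Matrix (Fin n) (Fin n) ℂ := (hXbpos.1.eigenvectorUnitary : Matrix (Fin n) (Fin n) ℂ)
    with hWdef
  set xw := hXbpos.1.eigenvalues with hxwdef
  have hW : unit W := unit_eigen hXbpos.1
  have hxw : ∀ i, 0 < xw i := hXbpos.eigenvalues_pos
  have hXwrep : t • (U₁ * dg x₁ * U₁ᴴ) + (1-t) • (U₂ * dg x₂ * U₂ᴴ) = W * dg xw * Wᴴ :=
    herm_rep hXbpos.1
  -- convexity of relative entropy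
  have hAbar : Vb * dg ab * Vbᴴ = t • (V₁ * dg a₁ * V₁ᴴ) + (1-t) • (V₂ * dg a₂ * V₂ᴴ) := by
    rw [← herm_rep hAb.1, ← herm_rep hA₁.1, ← herm_rep hA₂.1, hAb_def]
  have hconv := Drel_convex hU₁ hV₁ hU₂ hV₂ hW hVb hx₁ ha₁ hx₂ ha₂ hxw hab ht0 ht1
    hXwrep.symm hAbar
  -- Klein's inequality
  have hlogxb : dg (fun j => Real.log (xb j)) = dg mub := by
    unfold dg
    congr 1
    funext j
    rw [hxbdef]
    simp [Real.log_exp]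
  have hklein := klein hW hUb hxw hxb
  rw [hlogxb, ← herm_rep hMb] at hklein
  have hsplitb : ((W * dg xw * Wᴴ) * (H + cfc Real.log Ab)).trace.re
      = ((W * dg xw * Wᴴ) * H).trace.re
        + ((W * dg xw * Wᴴ) * (Vb * dg (Real.log ∘ ab) * Vbᴴ)).trace.re := by
    rw [hLb, Matrix.mul_add, Matrix.trace_add, Complex.add_re]
  have hDb : Drel W Vb xw ab = (∑ i, xw i * Real.log (xw i))
      - ((W * dg xw * Wᴴ) * (Vb * dg (Real.log ∘ ab) * Vbᴴ)).trace.re := by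
    rw [Drel_trace hW hVb xw ab, hfunb]
  have hlinH : ((W * dg xw * Wᴴ) * H).trace.re
      = t * ((U₁ * dg x₁ * U₁ᴴ) * H).trace.re + (1-t) * ((U₂ * dg x₂ * U₂ᴴ) * H).trace.re := by
    rw [← hXwrep, Matrix.add_mul, Matrix.smul_mul, Matrix.smul_mul, trace_re_affine]
  have hlinS : (∑ i, xw i) = t * (∑ i, x₁ i) + (1-t) * (∑ i, x₂ i) := by
    have h := congrArg (fun A : Matrix (Fin n) (Fin n) ℂ => A.trace.re) hXwrep
    rw [trace_one' hW.1, trace_re_affine, trace_one' hU₁.1, trace_one' hU₂.1,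
      Complex.ofReal_re, Complex.ofReal_re, Complex.ofReal_re] at h
    exact h.symm
  rw [hE₁, hE₂, hEb]
  rw [hsplitb] at hklein
  rw [hD₁, hD₂] at hconv
  revert hklein hconv hDb hlinH hlinS
  generalize ((W * dg xw * Wᴴ) * H).trace.re = TH
  generalize ((W * dg xw * Wᴴ) * (Vb * dg (Real.log ∘ ab) * Vbᴴ)).trace.re = TL
  generalize ((U₁ * dg x₁ * U₁ᴴ) * H).trace.re = T1
  generalize ((U₂ * dg x₂ * U₂ᴴ) * H).trace.re = T2
  generalize Drel W Vb xw ab = Dv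
  generalize (∑ i, xw i * Real.log (xw i)) = E
  generalize (∑ i, xw i) = S
  generalize (∑ i, xb i) = B
  generalize (∑ i, x₁ i) = S1
  generalize (∑ i, x₂ i) = S2
  intro hklein hconv hDb hlinH hlinS
  linarith
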